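/- arXiv:2505.23089 — 2 statements merged into one kernel-verified Lean document; each statement's English description precedes it below -/
import Mathlib

section
/- Suppose (X, G) is a CR-dynamical system. Then for every integer k ≥ 1, the set of legal points of (X, G) equals the set of legal points of (X, Gᵏ). -/
open Set Filter Topology

/-- The n-fold relational composition of `G` (with `G⁰` the diagonal). -/
def relPow {X : Type*} (G : Set (X × X)) : ℕ → Set (X × X)
  | 0 => Set.diagonal X
  | n + 1 => {p : X × X | ∃ z : X, (p.1, z) ∈ relPow G n ∧ (z, p.2) ∈ G}

/-- `s` is a trajectory of `x` in `(X, G)`. -/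
def IsTrajectory {X : Type*} (G : Set (X × X)) (x : X) (s : ℕ → X) : Prop :=
  s 0 = x ∧ ∀ n : ℕ, (s n, s (n + 1)) ∈ G

/-- `x` is a legal point of `(X, G)`. -/
def IsLegal {X : Type*} (G : Set (X × X)) (x : X) : Prop :=
  ∃ s : ℕ → X, IsTrajectory G x s

/-- The set of non-degenerate points of `(X, G)`. -/
def ndDom {X : Type*} (G : Set (X × X)) : Set X := {x : X | ∃ y : X, (x, y) ∈ G}

/-- An entourage of the unique compatible uniformity on a compact Hausdorff space:
a neighbourhood of the diagonal in `X × X`. -/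
def IsEntourage {X : Type*} [TopologicalSpace X] (U : Set (X × X)) : Prop :=
  U ∈ 𝓝ˢ (Set.diagonal X)

/-- `(V,1)`-pseudo-orbit. -/
def IsPO1 {X : Type*} (G V : Set (X × X)) (x : ℕ → X) : Prop :=
  (∀ n : ℕ, x n ∈ ndDom G) ∧ ∀ n : ℕ, ∀ y : X, (x n, y) ∈ G → (y, x (n + 1)) ∈ V

/-- `(V,2)`-pseudo-orbit. -/
def IsPO2 {X : Type*} (G V : Set (X × X)) (x : ℕ → X) : Prop :=
  (∀ n : ℕ, x n ∈ ndDom G) ∧ ∀ n : ℕ, ∃ y : X, (x n, y) ∈ G ∧ (y, x (n + 1)) ∈ V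

/-- The legal point `y` `(U,1)`-shadows the sequence `x`. -/
def Shadows1 {X : Type*} (G U : Set (X × X)) (y : X) (x : ℕ → X) : Prop :=
  IsLegal G y ∧ ∀ s : ℕ → X, IsTrajectory G y s → ∀ n : ℕ, (s n, x n) ∈ U

/-- The point `y` `(U,2)`-shadows the sequence `x`. -/
def Shadows2 {X : Type*} (G U : Set (X × X)) (y : X) (x : ℕ → X) : Prop :=
  ∃ s : ℕ → X, IsTrajectory G y s ∧ ∀ n : ℕ, (s n, x n) ∈ U

/-- The `(1,1)`-shadowing property. -/
def Shadowing11 {X : Type*} [TopologicalSpace X] (G : Set (X × X)) : Prop :=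
  ∀ U : Set (X × X), IsEntourage U → ∃ V : Set (X × X), IsEntourage V ∧
    ∀ x : ℕ → X, IsPO1 G V x → ∃ y : X, Shadows1 G U y x

/-- The `(1,2)`-shadowing property. -/
def Shadowing12 {X : Type*} [TopologicalSpace X] (G : Set (X × X)) : Prop :=
  ∀ U : Set (X × X), IsEntourage U → ∃ V : Set (X × X), IsEntourage V ∧
    ∀ x : ℕ → X, IsPO1 G V x → ∃ y : X, Shadows2 G U y x

/-- The `(2,1)`-shadowing property. -/
def Shadowing21 {X : Type*} [TopologicalSpace X] (G : Set (X × X)) : Prop :=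
  ∀ U : Set (X × X), IsEntourage U → ∃ V : Set (X × X), IsEntourage V ∧
    ∀ x : ℕ → X, IsPO2 G V x → ∃ y : X, Shadows1 G U y x

/-- The `(2,2)`-shadowing property. -/
def Shadowing22 {X : Type*} [TopologicalSpace X] (G : Set (X × X)) : Prop :=
  ∀ U : Set (X × X), IsEntourage U → ∃ V : Set (X × X), IsEntourage V ∧
    ∀ x : ℕ → X, IsPO2 G V x → ∃ y : X, Shadows2 G U y x

lemma traj_relPow {X : Type*} (G : Set (X × X)) (s : ℕ → X)
    (hs : ∀ n : ℕ, (s n, s (n + 1)) ∈ G) :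
    ∀ j m : ℕ, (s m, s (m + j)) ∈ relPow G j := by
  intro j
  induction j with
  | zero => intro m; simp [relPow, Set.diagonal]
  | succ j ih => intro m; exact ⟨s (m + j), ih m, hs (m + j)⟩

lemma relPow_path {X : Type*} (G : Set (X × X)) :
    ∀ k : ℕ, ∀ a b : X, (a, b) ∈ relPow G k →
      ∃ p : ℕ → X, p 0 = a ∧ p k = b ∧ ∀ i < k, (p i, p (i + 1)) ∈ G := by
  intro k
  induction k with
  | zero =>
    intro a b h
    exact ⟨fun _ => a, rfl, h, by simp⟩
  | succ k ih =>
    rintro a b ⟨z, hz1, hz2⟩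
    obtain ⟨p, hp0, hpk, hpe⟩ := ih a z hz1
    refine ⟨fun i => if i = k + 1 then b else p i, by simp [hp0], by simp, ?_⟩
    intro i hi
    rcases Nat.lt_succ_iff_lt_or_eq.mp hi with h | h
    · have h1 : i ≠ k + 1 := by omega
      have h2 : i + 1 ≠ k + 1 := by omega
      simpa [h1, h2, show i ≠ k by omega] using hpe i h
    · have h1 : i ≠ k + 1 := by omega
      have h2 : i + 1 = k + 1 := by omega
      simp only [h1, h2, if_true, if_false, if_neg, if_pos, ite_true, ite_false]
      simp only [h, hpk]
      exact hz2

/-- the legal points of (X,G) and (X,Gᵏ) coincide. -/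
theorem stmt_5 {X : Type*} [TopologicalSpace X] [CompactSpace X] [T2Space X] [Nonempty X]
    (G : Set (X × X)) (hGclosed : IsClosed G) (hGne : G.Nonempty)
    (hGpow : ∀ n : ℕ, 1 ≤ n → (relPow G n).Nonempty) :
    ∀ k : ℕ, 1 ≤ k → {x : X | IsLegal G x} = {x : X | IsLegal (relPow G k) x} := by
  intro k hk
  have hkpos : 0 < k := hk
  ext x
  simp only [Set.mem_setOf_eq]
  constructor
  · rintro ⟨s, hs0, hse⟩
    refine ⟨fun n => s (n * k), by simpa using hs0, fun n => ?_⟩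
    have := traj_relPow G s hse k (n * k)
    simpa [add_mul, one_mul] using this
  · rintro ⟨t, ht0, hte⟩
    choose p hp0 hpk hpe using fun n => relPow_path G k (t n) (t (n + 1)) (hte n)
    refine ⟨fun m => p (m / k) (m % k), ?_, ?_⟩
    · simp [Nat.zero_div, Nat.zero_mod, hp0, ht0]
    · intro m
      set q := m / k with hq
      set r := m % k with hr
      have hrk : r < k := Nat.mod_lt _ hkpos
      have hm : k * q + r = m := Nat.div_add_mod m k
      rcases lt_or_eq_of_le (Nat.succ_le_of_lt hrk) with h | h
      · have hm1 : m + 1 = k * q + (r + 1) := by rw [← hm, Nat.add_assoc]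
        have hdiv : (m + 1) / k = q := by
          rw [hm1, Nat.mul_add_div hkpos, Nat.div_eq_of_lt h, Nat.add_zero]
        have hmod : (m + 1) % k = r + 1 := by
          rw [hm1, Nat.mul_add_mod, Nat.mod_eq_of_lt h]
        show (p q r, p ((m + 1) / k) ((m + 1) % k)) ∈ G
        rw [hdiv, hmod]
        exact hpe q r hrk
      · have hm1 : m + 1 = k * (q + 1) := by
          rw [Nat.mul_succ, ← hm, Nat.add_assoc]
          exact congrArg (k * q + ·) h
        have hdiv : (m + 1) / k = q + 1 := by
          rw [hm1, Nat.mul_div_cancel_left _ hkpos]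
        have hmod : (m + 1) % k = 0 := by rw [hm1, Nat.mul_mod_right]
        show (p q r, p ((m + 1) / k) ((m + 1) % k)) ∈ G
        rw [hdiv, hmod, hp0 (q + 1), ← hpk q]
        have := hpe q r hrk
        rwa [show r + 1 = k from h] at this
end

section
/- Let (X, G) be a CR-dynamical system such that G ⊆ G² ⊆ G³ ⊆ ⋯. Then (X, G) has the (1,2)-shadowing property if and only if (X, Gᵏ) has the (1,2)-shadowing property for every integer k ≥ 1. -/
open Set Filter Topology

lemma relPow_one' {X : Type*} (G : Set (X × X)) : relPow G 1 = G := by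
  ext ⟨a, b⟩
  constructor
  · rintro ⟨z, hz, hzb⟩
    cases hz; exact hzb
  · intro h; exact ⟨a, rfl, h⟩

lemma subset_relPow' {X : Type*} (G : Set (X × X))
    (hchain : ∀ k : ℕ, 1 ≤ k → relPow G k ⊆ relPow G (k + 1)) :
    ∀ k : ℕ, 1 ≤ k → G ⊆ relPow G k := by
  intro k hk
  induction k with
  | zero => omega
  | succ n ih =>
    rcases Nat.eq_or_lt_of_le hk with h | h
    · rw [← h]; rw [relPow_one']
    · have hn : 1 ≤ n := by omega
      exact (ih hn).trans (hchain n hn)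

lemma ndDom_relPow' {X : Type*} (G : Set (X × X)) :
    ∀ n : ℕ, 1 ≤ n → ndDom (relPow G n) ⊆ ndDom G := by
  intro n hn
  induction n with
  | zero => omega
  | succ m ih =>
    rintro x ⟨y, z, hxz, hzy⟩
    rcases Nat.eq_zero_or_pos m with h | h
    · subst h; cases hxz; exact ⟨y, hzy⟩
    · exact ih h ⟨z, hxz⟩

/-- if G ⊆ G² ⊆ G³ ⊆ ⋯ then (X,G) has the (1,2)-shadowing property
iff (X,Gᵏ) does for all k ≥ 1. -/
theorem stmt_7 {X : Type*} [TopologicalSpace X] [CompactSpace X] [T2Space X] [Nonempty X]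
    (G : Set (X × X)) (hGclosed : IsClosed G) (hGne : G.Nonempty)
    (hGpow : ∀ n : ℕ, 1 ≤ n → (relPow G n).Nonempty)
    (hchain : ∀ k : ℕ, 1 ≤ k → relPow G k ⊆ relPow G (k + 1)) :
    Shadowing12 G ↔ ∀ k : ℕ, 1 ≤ k → Shadowing12 (relPow G k) := by
  constructor
  · intro hG k hk U hU
    obtain ⟨V, hV, hVsh⟩ := hG U hU
    refine ⟨V, hV, fun x hx => ?_⟩
    obtain ⟨hdom, hstep⟩ := hx
    have hxG : IsPO1 G V x := by
      refine ⟨fun n => ndDom_relPow' G k hk (hdom n), fun n y hy => ?_⟩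
      exact hstep n y (subset_relPow' G hchain k hk hy)
    obtain ⟨y, s, ⟨hs0, hsstep⟩, hsU⟩ := hVsh x hxG
    exact ⟨y, s, ⟨hs0, fun n => subset_relPow' G hchain k hk (hsstep n)⟩, hsU⟩
  · intro h
    have := h 1 le_rfl
    rwa [relPow_one'] at this
end
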